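/- (Fluid abandoning queue-length formula.) Let ϑ ∈ I, let ζ be the unique fluid model solution with initial measure ϑ, let w be the unique workload fluid model solution with w(0) = w_ϑ, define τ(t) = inf{s ∈ [0,t] : w(s) + s ≥ t}, and let L = {(a,p) ∈ [0,∞)² : p ≤ a}. Then for each 1 ≤ k ≤ K: if 0 ≤ t < w(0), then ζ_k(t)(L) = ϑ_k(L_t) + λ_k ∫_0^t (G_k(t−v) − G_k(w(v))) dv; and if t ≥ w(0), then ζ_k(t)(L) = λ_k ∫_{τ(t)}^t (G_k(t−v) − G_k(w(v))) dv. -/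

import Mathlib

open MeasureTheory Set Filter Topology
open scoped ENNReal

noncomputable section

namespace OverloadedFIFO

/-- The complement `G(x) = Γ((x, ∞))` of the cumulative distribution function of `Γ`. -/
def Gk (Γ : MeasureTheory.Measure ℝ) (x : ℝ) : ℝ := (Γ (Set.Ioi x)).toReal

/-- Model data: `K` job classes with arrival rates `lam`, service rates `mu`, and
deadline (patience) distributions `Γ`, in the overloaded regime `ρ > 1`.  Each `Γ k` is a
Borel probability measure on `[0,∞)` (no mass on negatives), with continuous c.d.f.
(no atoms, in particular `Γ k {0} = 0`) and finite mean. -/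
structure Data (K : ℕ) where
  lam : Fin K → ℝ
  mu : Fin K → ℝ
  Γ : Fin K → MeasureTheory.Measure ℝ
  lam_pos : ∀ k, 0 < lam k
  mu_pos : ∀ k, 0 < mu k
  Γ_prob : ∀ k, MeasureTheory.IsProbabilityMeasure (Γ k)
  Γ_null_neg : ∀ k, Γ k (Set.Iio 0) = 0
  Γ_noAtom : ∀ k, ∀ x : ℝ, Γ k {x} = 0
  Γ_finite_mean : ∀ k, MeasureTheory.Integrable id (Γ k)
  rho_gt_one : 1 < ∑ k, lam k / mu k

instance {K : ℕ} (D : Data K) (k : Fin K) : IsProbabilityMeasure (D.Γ k) := D.Γ_prob k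

/-- `ρ_k = λ_k / μ_k`. -/
def Data.rho {K : ℕ} (D : Data K) (k : Fin K) : ℝ := D.lam k / D.mu k

/-- `ρ = Σ_k ρ_k`. -/
def Data.rhoTot {K : ℕ} (D : Data K) : ℝ := ∑ k, D.rho k

/-- A workload fluid model solution: a nonnegative function `w` on `[0,∞)` satisfying
`w(t) = w(0) + Σ_k ρ_k ∫_0^t G_k(w(s)) ds − t` for all `t ≥ 0`. -/
def IsWorkloadSol {K : ℕ} (D : Data K) (w : ℝ → ℝ) : Prop :=
  (∀ t : ℝ, 0 ≤ t → 0 ≤ w t) ∧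
  (∀ k : Fin K, ∀ t : ℝ, 0 ≤ t →
    IntervalIntegrable (fun s => Gk (D.Γ k) (w s)) volume 0 t) ∧
  (∀ t : ℝ, 0 ≤ t →
    w t = w 0 + (∑ k, D.rho k * ∫ s in (0:ℝ)..t, Gk (D.Γ k) (w s)) - t)

/-- `w_l = sup {u ≥ 0 : Σ_k ρ_k G_k(u) > 1}`. -/
def wl {K : ℕ} (D : Data K) : ℝ :=
  sSup {u : ℝ | 0 ≤ u ∧ 1 < ∑ k, D.rho k * Gk (D.Γ k) u}

/-- `w_u = sup {u ≥ 0 : Σ_k ρ_k G_k(u) ≥ 1}`. -/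
def wu {K : ℕ} (D : Data K) : ℝ :=
  sSup {u : ℝ | 0 ≤ u ∧ 1 ≤ ∑ k, D.rho k * Gk (D.Γ k) u}

/-- `d_max = max_k sup {x ≥ 0 : G_k(x) > 0} ∈ (0,∞]`, as an extended nonnegative real. -/
def dmax {K : ℕ} (D : Data K) : ℝ≥0∞ :=
  ⨆ k, sSup (ENNReal.ofReal '' {x : ℝ | 0 ≤ x ∧ 0 < Gk (D.Γ k) x})

/-- `τ(t) = inf {s ∈ [0,t] : w(s) + s ≥ t}`. -/
def tauF (w : ℝ → ℝ) (t : ℝ) : ℝ := sInf {s : ℝ | 0 ≤ s ∧ s ≤ t ∧ t ≤ w s + s}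

/-- The nonnegative quadrant `[0,∞)²`. -/
def Q : Set (ℝ × ℝ) := {p | 0 ≤ p.1 ∧ 0 ≤ p.2}

/-- The shift `B_x = {y ∈ [0,∞)² : y − x ∈ B}` of a set `B ⊆ [0,∞)²`. -/
def shift (B : Set (ℝ × ℝ)) (x : ℝ × ℝ) : Set (ℝ × ℝ) :=
  {y | y ∈ Q ∧ (y.1 - x.1, y.2 - x.2) ∈ B}

/-- Diagonal shift `B_t = B_{(t,t)}`. -/
def shiftd (B : Set (ℝ × ℝ)) (t : ℝ) : Set (ℝ × ℝ) := shift B (t, t)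

/-- The set `C = ([0,∞)×{0}) ∪ ({0}×[0,∞))`. -/
def Cset : Set (ℝ × ℝ) := {p | (0 ≤ p.1 ∧ p.2 = 0) ∨ (p.1 = 0 ∧ 0 ≤ p.2)}

/-- The `κ`-enlargement `B^κ = {x ∈ [0,∞)² : inf_{y ∈ B} ‖x−y‖ < κ}` (Euclidean norm). -/
def enlarge (B : Set (ℝ × ℝ)) (κ : ℝ) : Set (ℝ × ℝ) :=
  {x | x ∈ Q ∧ ∃ y ∈ B, Real.sqrt ((x.1 - y.1) ^ 2 + (x.2 - y.2) ^ 2) < κ}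

/-- `w_ϑ = sup {x ≥ 0 : ϑ_+([x,∞)×[0,∞)) > 0}` for a `K`-tuple `ϑ` of measures on `[0,∞)²`. -/
def wMeas {K : ℕ} (ϑ : Fin K → MeasureTheory.Measure (ℝ × ℝ)) : ℝ :=
  sSup {x : ℝ | 0 ≤ x ∧ 0 < ∑ k, ϑ k (Set.Ici x ×ˢ Set.Ici (0:ℝ))}

/-- Membership in the set `I` of admissible initial measures: each `ϑ k` is a finite Borel
measure on `[0,∞)²`; (I.1) the superposition charges no corner set `C_x`, `x ∈ [0,∞)²`;
(I.2) `w_ϑ < ∞`; (I.3) `max_k G_k(w_ϑ − ε) > 0` for every `ε > 0`. -/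
def MemI {K : ℕ} (D : Data K) (ϑ : Fin K → MeasureTheory.Measure (ℝ × ℝ)) : Prop :=
  (∀ k, IsFiniteMeasure (ϑ k)) ∧
  (∀ k, ϑ k Qᶜ = 0) ∧
  (∀ x ∈ Q, (∑ k, ϑ k (shift Cset x)) = 0) ∧
  BddAbove {x : ℝ | 0 ≤ x ∧ 0 < ∑ k, ϑ k (Set.Ici x ×ˢ Set.Ici (0:ℝ))} ∧
  (∀ ε : ℝ, 0 < ε → ∃ k, 0 < Gk (D.Γ k) (wMeas ϑ - ε))

/-- `δ⁺_w`: the Dirac measure at `w` if `w > 0`, and the zero measure otherwise. -/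
def deltaPlus (w : ℝ) : MeasureTheory.Measure ℝ :=
  if 0 < w then MeasureTheory.Measure.dirac w else 0

instance (w : ℝ) : SFinite (deltaPlus w) := by
  unfold deltaPlus; split_ifs <;> infer_instance

/-- `(δ⁺_w × Γ)(B)`, as a real number. -/
def kern (Γ : MeasureTheory.Measure ℝ) (w : ℝ) (B : Set (ℝ × ℝ)) : ℝ :=
  (((deltaPlus w).prod Γ) B).toReal

/-- A (measure-valued) fluid model solution with initial measure `ϑ`: a family
`ζ(t) = (ζ_1(t),…,ζ_K(t))` of finite Borel measures on `[0,∞)²` with `ζ(0) = ϑ` satisfying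
`ζ_k(t)(B) = ϑ_k(B_t) + λ_k ∫_0^t (δ⁺_{w(s)} × Γ_k)(B_{t−s}) ds` for every Borel
`B ⊆ [0,∞)²` and `t ≥ 0`, where `w` is the (unique) workload fluid model solution with
`w(0) = w_ϑ`. -/
def IsFluidSol {K : ℕ} (D : Data K) (ϑ : Fin K → MeasureTheory.Measure (ℝ × ℝ))
    (ζ : ℝ → Fin K → MeasureTheory.Measure (ℝ × ℝ)) : Prop :=
  ∃ w : ℝ → ℝ, IsWorkloadSol D w ∧ w 0 = wMeas ϑ ∧
    (∀ t : ℝ, 0 ≤ t → ∀ k, IsFiniteMeasure (ζ t k) ∧ ζ t k Qᶜ = 0) ∧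
    (∀ k, ζ 0 k = ϑ k) ∧
    (∀ k, ∀ B : Set (ℝ × ℝ), B ⊆ Q → MeasurableSet B → ∀ t : ℝ, 0 ≤ t →
      IntervalIntegrable (fun s => kern (D.Γ k) (w s) (shiftd B (t - s))) volume 0 t ∧
      ζ t k B = ϑ k (shiftd B t) +
        ENNReal.ofReal (D.lam k * ∫ s in (0:ℝ)..t, kern (D.Γ k) (w s) (shiftd B (t - s))))

/-- The candidate invariant state `θ^w`:
`θ^w_k(B) = λ_k ∫_0^w Γ_k({p ≥ u : (w−u, p−u) ∈ B}) du`. -/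
def thetaW {K : ℕ} (D : Data K) (w : ℝ) (k : Fin K) : MeasureTheory.Measure (ℝ × ℝ) :=
  ENNReal.ofReal (D.lam k) •
    MeasureTheory.Measure.map (fun up : ℝ × ℝ => (w - up.1, up.2 - up.1))
      ((((MeasureTheory.volume.restrict (Set.Ioo (0:ℝ) w))).prod (D.Γ k)).restrict
        {up : ℝ × ℝ | up.1 ≤ up.2})


-- ===== auxiliary lemmas =====

-- the abandoning set
def Lset : Set (ℝ × ℝ) := {p : ℝ × ℝ | 0 ≤ p.2 ∧ p.2 ≤ p.1}


lemma shiftd_L_eq (r : ℝ) (hr : 0 ≤ r) :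
    shiftd Lset r = {y : ℝ × ℝ | 0 ≤ y.1 ∧ r ≤ y.2 ∧ y.2 ≤ y.1} := by
  ext y
  simp only [shiftd, shift, Lset, Q, mem_setOf_eq]
  constructor
  · rintro ⟨⟨h1, h2⟩, h3, h4⟩; exact ⟨h1, by linarith, by linarith⟩
  · rintro ⟨h1, h2, h3⟩; exact ⟨⟨h1, by linarith⟩, by constructor <;> [skip; skip] <;> simp <;> linarith⟩

lemma measurable_shiftd_L (r : ℝ) : MeasurableSet (shiftd Lset r) := by
  have : shiftd Lset r = {y : ℝ × ℝ | 0 ≤ y.1} ∩ {y | 0 ≤ y.2} ∩ ({y | r ≤ y.2} ∩ {y | y.2 - r ≤ y.1 - r}) := by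
    ext y; simp only [shiftd, shift, Lset, Q, mem_setOf_eq, mem_inter_iff]
    constructor
    · rintro ⟨⟨h1, h2⟩, h3, h4⟩; exact ⟨⟨h1, h2⟩, by linarith, h4⟩
    · rintro ⟨⟨h1, h2⟩, h3, h4⟩; exact ⟨⟨h1, h2⟩, by linarith, h4⟩
  rw [this]
  refine (((measurableSet_le measurable_const measurable_fst).inter
    (measurableSet_le measurable_const measurable_snd)).inter
    ((measurableSet_le measurable_const measurable_snd).inter
      (measurableSet_le (measurable_snd.sub measurable_const) (measurable_fst.sub measurable_const))))

lemma kern_eq_zero_of_lt (Γ : Measure ℝ) [SFinite Γ] {wv r : ℝ} (h : wv < r) :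
    kern Γ wv (shiftd Lset r) = 0 := by
  unfold kern deltaPlus
  by_cases hw : 0 < wv
  · rw [if_pos hw, Measure.dirac_prod,
      Measure.map_apply measurable_prodMk_left (measurable_shiftd_L r)]
    have : (Prod.mk wv) ⁻¹' (shiftd Lset r) = ∅ := by
      ext p
      simp only [mem_preimage, shiftd, shift, Lset, Q, mem_setOf_eq, mem_empty_iff_false, iff_false]
      rintro ⟨⟨h1, h2⟩, h3, h4⟩
      linarith
    rw [this]; simp
  · rw [if_neg hw]; simp

lemma kern_eq (Γ : Measure ℝ) [IsProbabilityMeasure Γ] (hatom : ∀ x : ℝ, Γ {x} = 0)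
    {wv r : ℝ} (hw : 0 < wv) (hr : 0 ≤ r) (hrw : r ≤ wv) :
    kern Γ wv (shiftd Lset r) = Gk Γ r - Gk Γ wv := by
  unfold kern deltaPlus
  rw [if_pos hw, Measure.dirac_prod,
    Measure.map_apply measurable_prodMk_left (measurable_shiftd_L r)]
  have hpre : (Prod.mk wv) ⁻¹' (shiftd Lset r) = Set.Icc r wv := by
    ext p
    simp only [mem_preimage, shiftd, shift, Lset, Q, mem_setOf_eq, mem_Icc]
    constructor
    · rintro ⟨⟨h1, h2⟩, h3, h4⟩; exact ⟨by linarith, by linarith⟩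
    · rintro ⟨h1, h2⟩; exact ⟨⟨le_of_lt hw, by linarith⟩, by constructor <;> linarith⟩
  rw [hpre]
  have hIcc : Γ (Icc r wv) = Γ (Ioc r wv) := by
    refine le_antisymm ?_ (measure_mono Ioc_subset_Icc_self)
    have h1 : Icc r wv ⊆ {r} ∪ Ioc r wv := by
      intro x hx
      rcases eq_or_lt_of_le hx.1 with h | h
      · exact Or.inl (by simp [h.symm])
      · exact Or.inr ⟨h, hx.2⟩
    calc Γ (Icc r wv) ≤ Γ ({r} ∪ Ioc r wv) := measure_mono h1
      _ ≤ Γ {r} + Γ (Ioc r wv) := measure_union_le _ _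
      _ = Γ (Ioc r wv) := by rw [hatom r, zero_add]
  have hsplit : Γ (Set.Ioi r) = Γ (Ioc r wv) + Γ (Set.Ioi wv) := by
    rw [← measure_union (Set.Ioc_disjoint_Ioi le_rfl) measurableSet_Ioi,
      Set.Ioc_union_Ioi_eq_Ioi hrw]
  have hfin1 : Γ (Ioc r wv) ≠ ⊤ := measure_ne_top _ _
  have hfin2 : Γ (Set.Ioi wv) ≠ ⊤ := measure_ne_top _ _
  rw [hIcc]
  unfold Gk
  rw [hsplit, ENNReal.toReal_add hfin1 hfin2]
  ring


lemma Gk_nonneg (Γ : Measure ℝ) (x : ℝ) : 0 ≤ Gk Γ x := ENNReal.toReal_nonneg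
lemma Gk_antitone (Γ : Measure ℝ) [IsProbabilityMeasure Γ] : Antitone (Gk Γ) := by
  intro a b hab
  exact ENNReal.toReal_mono (measure_ne_top _ _) (measure_mono (Ioi_subset_Ioi hab))
lemma Gk_le_one (Γ : Measure ℝ) [IsProbabilityMeasure Γ] (x : ℝ) : Gk Γ x ≤ 1 := by
  have := measure_mono (μ := Γ) (subset_univ (Set.Ioi x))
  simpa [Gk] using ENNReal.toReal_mono (by simp) this

variable {K : ℕ} {D : Data K} {w : ℝ → ℝ}

lemma rho_nonneg (D : Data K) (k : Fin K) : 0 ≤ D.rho k :=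
  le_of_lt (div_pos (D.lam_pos k) (D.mu_pos k))

lemma IsWorkloadSol.intInt (hw : IsWorkloadSol D w) (k : Fin K) {a b : ℝ} (ha : 0 ≤ a) (hb : 0 ≤ b) :
    IntervalIntegrable (fun s => Gk (D.Γ k) (w s)) volume a b := by
  rcases le_total a b with h | h
  · exact (hw.2.1 k b hb).mono_set (by rw [uIcc_of_le h, uIcc_of_le hb]; exact Icc_subset_Icc ha le_rfl)
  · exact (hw.2.1 k a ha).mono_set (by rw [uIcc_of_ge h, uIcc_of_le ha]; exact Icc_subset_Icc hb le_rfl)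

lemma IsWorkloadSol.eq_ab (hw : IsWorkloadSol D w) {a b : ℝ} (ha : 0 ≤ a) (hab : a ≤ b) :
    w b = w a + (∑ k, D.rho k * ∫ s in a..b, Gk (D.Γ k) (w s)) - (b - a) := by
  have hb : 0 ≤ b := le_trans ha hab
  have h1 := hw.2.2 a ha
  have h2 := hw.2.2 b hb
  have h3 : ∀ k : Fin K, (∫ s in (0:ℝ)..b, Gk (D.Γ k) (w s)) =
      (∫ s in (0:ℝ)..a, Gk (D.Γ k) (w s)) + ∫ s in a..b, Gk (D.Γ k) (w s) := fun k =>
    (intervalIntegral.integral_add_adjacent_intervals (hw.intInt k le_rfl ha)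
      (hw.intInt k ha hb)).symm
  rw [h2, h1]
  simp only [h3, mul_add, Finset.sum_add_distrib]
  ring

lemma IsWorkloadSol.mono_add (hw : IsWorkloadSol D w) {a b : ℝ} (ha : 0 ≤ a) (hab : a ≤ b) :
    w a + a ≤ w b + b := by
  have := hw.eq_ab ha hab
  have hs : 0 ≤ ∑ k, D.rho k * ∫ s in a..b, Gk (D.Γ k) (w s) := by
    refine Finset.sum_nonneg fun k _ => mul_nonneg (rho_nonneg D k) ?_
    exact intervalIntegral.integral_nonneg hab (fun u _ => Gk_nonneg _ _)
  linarith

lemma IsWorkloadSol.lower (hw : IsWorkloadSol D w) {t : ℝ} (ht : 0 ≤ t) : w 0 - t ≤ w t := by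
  have := hw.mono_add le_rfl ht
  linarith

lemma IsWorkloadSol.continuousOn (hw : IsWorkloadSol D w) : ContinuousOn w (Ici 0) := by
  set C : ℝ := (∑ k, D.rho k) + 1 with hC
  have hC0 : 0 ≤ C := by
    have : 0 ≤ ∑ k, D.rho k := Finset.sum_nonneg fun k _ => rho_nonneg D k
    linarith
  have key : ∀ a b : ℝ, 0 ≤ a → a ≤ b → |w b - w a| ≤ C * |b - a| := by
    intro a b ha hab
    have heq := hw.eq_ab ha hab
    have hbound : ∀ k : Fin K, |∫ s in a..b, Gk (D.Γ k) (w s)| ≤ |b - a| := by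
      intro k
      have h1 := intervalIntegral.norm_integral_le_of_norm_le_const (a := a) (b := b) (C := 1)
        (f := fun s => Gk (D.Γ k) (w s)) (fun x _ => by
          rw [Real.norm_eq_abs, abs_of_nonneg (Gk_nonneg _ _)]; exact Gk_le_one _ _)
      rw [Real.norm_eq_abs] at h1
      linarith
    have hsum : |∑ k, D.rho k * ∫ s in a..b, Gk (D.Γ k) (w s)| ≤ (∑ k, D.rho k) * |b - a| := by
      calc |∑ k, D.rho k * ∫ s in a..b, Gk (D.Γ k) (w s)|
          ≤ ∑ k, |D.rho k * ∫ s in a..b, Gk (D.Γ k) (w s)| := Finset.abs_sum_le_sum_abs _ _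
        _ ≤ ∑ k, D.rho k * |b - a| := by
            refine Finset.sum_le_sum fun k _ => ?_
            rw [abs_mul, abs_of_nonneg (rho_nonneg D k)]
            refine mul_le_mul_of_nonneg_left ?_ (rho_nonneg D k)
            exact hbound k
        _ = (∑ k, D.rho k) * |b - a| := by rw [Finset.sum_mul]
    have : w b - w a = (∑ k, D.rho k * ∫ s in a..b, Gk (D.Γ k) (w s)) - (b - a) := by
      rw [heq]; ring
    rw [this]
    calc |(∑ k, D.rho k * ∫ s in a..b, Gk (D.Γ k) (w s)) - (b - a)|
        ≤ |∑ k, D.rho k * ∫ s in a..b, Gk (D.Γ k) (w s)| + |b - a| := abs_sub _ _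
      _ ≤ (∑ k, D.rho k) * |b - a| + 1 * |b - a| := by
          refine add_le_add hsum ?_; rw [one_mul]
      _ = C * |b - a| := by ring
  refine (LipschitzOnWith.of_dist_le_mul (K := ⟨C, hC0⟩) (f := w) (s := Ici 0) ?_).continuousOn
  intro x hx y hy
  rcases le_total y x with h | h
  · rw [Real.dist_eq, Real.dist_eq]; exact key y x hy h
  · rw [Real.dist_eq, Real.dist_eq, abs_sub_comm (w x), abs_sub_comm x]
    exact key x y hx h

theorem workload_le (hw : IsWorkloadSol D w) {w2 : ℝ → ℝ} (hw2 : IsWorkloadSol D w2)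
    (h0 : w 0 = w2 0) : ∀ t : ℝ, 0 ≤ t → w t ≤ w2 t := by
  intro t0 ht0
  by_contra hlt
  push_neg at hlt
  set u : ℝ → ℝ := fun s => w s - w2 s with hu
  have hu0 : u 0 = 0 := by simp [hu, h0]
  have hucont : ContinuousOn u (Icc 0 t0) :=
    ((hw.continuousOn.mono Icc_subset_Ici_self).sub (hw2.continuousOn.mono Icc_subset_Ici_self))
  set S : Set ℝ := Icc 0 t0 ∩ u ⁻¹' (Iic 0) with hS
  have hSne : S.Nonempty := ⟨0, ⟨le_rfl, ht0⟩, by simp [hu0]⟩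
  have hSbdd : BddAbove S := BddAbove.mono (inter_subset_left) (bddAbove_Icc)
  have hSclosed : IsClosed S := hucont.preimage_isClosed_of_isClosed isClosed_Icc isClosed_Iic
  set t1 := sSup S with ht1
  have ht1S : t1 ∈ S := hSclosed.csSup_mem hSne hSbdd
  have ht1pos : 0 ≤ t1 := ht1S.1.1
  have ht1le : t1 ≤ t0 := ht1S.1.2
  have hut1 : u t1 ≤ 0 := ht1S.2
  have hgt : ∀ s, t1 < s → s ≤ t0 → 0 < u s := by
    intro s hs1 hs2
    by_contra h
    push_neg at h
    have : s ∈ S := ⟨⟨le_trans ht1pos (le_of_lt hs1), hs2⟩, h⟩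
    exact absurd (le_csSup hSbdd this) (not_le.mpr hs1)
  -- per-k integral comparison on [t1, t0]
  have hcomp : ∀ k : Fin K,
      (∫ s in t1..t0, Gk (D.Γ k) (w s)) ≤ ∫ s in t1..t0, Gk (D.Γ k) (w2 s) := by
    intro k
    refine intervalIntegral.integral_mono_ae_restrict ht1le (hw.intInt k ht1pos (le_trans ht1pos ht1le))
      (hw2.intInt k ht1pos (le_trans ht1pos ht1le)) ?_
    have hnull : (volume.restrict (Icc t1 t0)) {t1} = 0 := by
      rw [Measure.restrict_apply (measurableSet_singleton _)]
      exact measure_mono_null (inter_subset_left) (measure_singleton _)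
    have hne : ∀ᵐ s ∂(volume.restrict (Icc t1 t0)), s ≠ t1 := by
      refine ae_iff.mpr ?_
      simpa using hnull
    filter_upwards [hne, ae_restrict_mem measurableSet_Icc] with s hs1 hs2
    have hst1 : t1 < s := lt_of_le_of_ne hs2.1 (fun h => hs1 h.symm)
    have := hgt s hst1 hs2.2
    have hws : w2 s ≤ w s := by simp only [hu] at this; linarith
    exact Gk_antitone _ hws
  have heq1 := hw.eq_ab ht1pos ht1le
  have heq2 := hw2.eq_ab ht1pos ht1le
  have hut0 : u t0 ≤ u t1 := by
    have : u t0 - u t1 = ∑ k, (D.rho k * (∫ s in t1..t0, Gk (D.Γ k) (w s))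
        - D.rho k * (∫ s in t1..t0, Gk (D.Γ k) (w2 s))) := by
      simp only [hu, heq1, heq2, Finset.sum_sub_distrib]
      ring
    have hnp : (∑ k, (D.rho k * (∫ s in t1..t0, Gk (D.Γ k) (w s))
        - D.rho k * (∫ s in t1..t0, Gk (D.Γ k) (w2 s)))) ≤ 0 := by
      refine Finset.sum_nonpos fun k _ => ?_
      have := mul_le_mul_of_nonneg_left (hcomp k) (rho_nonneg D k)
      linarith
    linarith
  have : 0 < u t0 := by simp only [hu]; linarith
  linarith

theorem workload_unique (hw : IsWorkloadSol D w) {w2 : ℝ → ℝ} (hw2 : IsWorkloadSol D w2)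
    (h0 : w 0 = w2 0) : ∀ t : ℝ, 0 ≤ t → w t = w2 t := fun t ht =>
  le_antisymm (workload_le hw hw2 h0 t ht) (workload_le hw2 hw h0.symm t ht)


lemma wMeas_nonneg {K : ℕ} (ϑ : Fin K → MeasureTheory.Measure (ℝ × ℝ)) : 0 ≤ wMeas ϑ :=
  Real.sSup_nonneg fun _ hx => hx.1

lemma theta_null {K : ℕ} (D : Data K) (ϑ : Fin K → MeasureTheory.Measure (ℝ × ℝ))
    (hϑ : MemI D ϑ) (k : Fin K) {t : ℝ} (ht : 0 ≤ t) (hwt : wMeas ϑ ≤ t) :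
    ϑ k (shiftd Lset t) = 0 := by
  have hcross : (∑ j, ϑ j (shift Cset (t, 0))) = 0 := hϑ.2.2.1 (t, 0) ⟨ht, le_rfl⟩
  have h1 : ϑ k (shift Cset (t, 0)) = 0 :=
    Finset.sum_eq_zero_iff.mp hcross k (Finset.mem_univ k)
  have h2 : ∀ n : ℕ, ϑ k (Set.Ici (t + 1 / (n + 1)) ×ˢ Set.Ici (0 : ℝ)) = 0 := by
    intro n
    set x : ℝ := t + 1 / (n + 1) with hxdef
    have hpos : (0 : ℝ) < 1 / ((n : ℝ) + 1) := by positivity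
    have hx : wMeas ϑ < x := lt_of_le_of_lt hwt (by simp only [hxdef]; linarith)
    have h0x : (0 : ℝ) ≤ x := by simp only [hxdef]; linarith
    have hxnot : x ∉ {x : ℝ | 0 ≤ x ∧ 0 < ∑ j, ϑ j (Set.Ici x ×ˢ Set.Ici (0 : ℝ))} :=
      fun hmem => absurd (le_csSup hϑ.2.2.2.1 hmem) (not_le.mpr hx)
    have hsum : (∑ j, ϑ j (Set.Ici x ×ˢ Set.Ici (0 : ℝ))) = 0 := by
      by_contra h
      exact hxnot ⟨h0x, pos_iff_ne_zero.mpr h⟩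
    exact Finset.sum_eq_zero_iff.mp hsum k (Finset.mem_univ k)
  have hsub : shiftd Lset t ⊆
      shift Cset (t, 0) ∪ ⋃ n : ℕ, Set.Ici (t + 1 / (n + 1)) ×ˢ Set.Ici (0 : ℝ) := by
    intro y hy
    rw [shiftd_L_eq t ht] at hy
    obtain ⟨hy1, hy2, hy3⟩ := hy
    have hty1 : t ≤ y.1 := le_trans hy2 hy3
    rcases eq_or_lt_of_le hty1 with h | h
    · left
      exact ⟨⟨hy1, le_trans ht hy2⟩, Or.inr ⟨by simp [← h], by simp; linarith⟩⟩
    · right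
      obtain ⟨n, hn⟩ := exists_nat_one_div_lt (show (0 : ℝ) < y.1 - t by linarith)
      have h1n : t + 1 / ((n : ℝ) + 1) ≤ y.1 := by linarith
      exact Set.mem_iUnion.mpr ⟨n, ⟨h1n, le_trans ht hy2⟩⟩
  exact measure_mono_null hsub (measure_union_null h1 (measure_iUnion_null h2))

/-- Fluid abandoning queue-length formula: with
`L = {(a,p) ∈ [0,∞)² : p ≤ a}`, for each `k`, if `0 ≤ t < w(0)` then
`ζ_k(t)(L) = ϑ_k(L_t) + λ_k ∫_0^t (G_k(t−v) − G_k(w(v))) dv`, and if `t ≥ w(0)` then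
`ζ_k(t)(L) = λ_k ∫_{τ(t)}^t (G_k(t−v) − G_k(w(v))) dv`. -/
theorem fluid_abandoning_queue_length {K : ℕ} (D : Data K)
    (ϑ : Fin K → MeasureTheory.Measure (ℝ × ℝ)) (hϑ : MemI D ϑ)
    (ζ : ℝ → Fin K → MeasureTheory.Measure (ℝ × ℝ)) (hζ : IsFluidSol D ϑ ζ)
    (w : ℝ → ℝ) (hw : IsWorkloadSol D w) (hw0 : w 0 = wMeas ϑ) :
    ∀ k,
      (∀ t : ℝ, 0 ≤ t → t < w 0 →
        ζ t k {p : ℝ × ℝ | 0 ≤ p.2 ∧ p.2 ≤ p.1} =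
          ϑ k (shiftd {p : ℝ × ℝ | 0 ≤ p.2 ∧ p.2 ≤ p.1} t) +
            ENNReal.ofReal
              (D.lam k * ∫ v in (0:ℝ)..t, (Gk (D.Γ k) (t - v) - Gk (D.Γ k) (w v)))) ∧
      (∀ t : ℝ, w 0 ≤ t →
        ζ t k {p : ℝ × ℝ | 0 ≤ p.2 ∧ p.2 ≤ p.1} =
          ENNReal.ofReal
            (D.lam k * ∫ v in (tauF w t)..t, (Gk (D.Γ k) (t - v) - Gk (D.Γ k) (w v)))) := by
  obtain ⟨w', hw', hw0', hfin, hinit, hform⟩ := hζ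
  have hww : ∀ s : ℝ, 0 ≤ s → w s = w' s :=
    workload_unique hw hw' (by rw [hw0, hw0'])
  have hLQ : Lset ⊆ Q := fun p hp => ⟨le_trans hp.1 hp.2, hp.1⟩
  have hLmeas : MeasurableSet Lset :=
    (measurableSet_le measurable_const measurable_snd).inter
      (measurableSet_le measurable_snd measurable_fst)
  have hw0nn : 0 ≤ w 0 := hw.1 0 le_rfl
  intro k
  constructor
  · -- case t < w 0
    intro t ht htw
    obtain ⟨hII, hform'⟩ := hform k Lset hLQ hLmeas t ht
    have hint_eq : (∫ s in (0:ℝ)..t, kern (D.Γ k) (w' s) (shiftd Lset (t - s))) =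
        ∫ v in (0:ℝ)..t, (Gk (D.Γ k) (t - v) - Gk (D.Γ k) (w v)) := by
      refine intervalIntegral.integral_congr ?_
      rw [uIcc_of_le ht]
      intro v hv
      obtain ⟨hv0, hvt⟩ := hv
      have hwv : t - v < w v := by
        have := hw.lower hv0
        linarith
      have hwvpos : 0 < w v := lt_of_le_of_lt (by linarith : (0:ℝ) ≤ t - v) hwv
      show kern (D.Γ k) (w' v) (shiftd Lset (t - v)) = Gk (D.Γ k) (t - v) - Gk (D.Γ k) (w v)
      rw [← hww v hv0]
      exact kern_eq (D.Γ k) (D.Γ_noAtom k) hwvpos (by linarith) (le_of_lt hwv)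
    show ζ t k Lset = ϑ k (shiftd Lset t) + ENNReal.ofReal
      (D.lam k * ∫ v in (0:ℝ)..t, (Gk (D.Γ k) (t - v) - Gk (D.Γ k) (w v)))
    rw [hform', hint_eq]
  · -- case t ≥ w 0
    intro t htw
    have ht : 0 ≤ t := le_trans hw0nn htw
    obtain ⟨hII, hform'⟩ := hform k Lset hLQ hLmeas t ht
    set S : Set ℝ := {s : ℝ | 0 ≤ s ∧ s ≤ t ∧ t ≤ w s + s} with hSdef
    have htS : t ∈ S := ⟨ht, le_rfl, by have := hw.1 t ht; linarith⟩
    have hSbdd : BddBelow S := ⟨0, fun s hs => hs.1⟩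
    have hSne : S.Nonempty := ⟨t, htS⟩
    have hτeq : tauF w t = sInf S := rfl
    set τ := sInf S with hτdef
    have hτ0 : 0 ≤ τ := le_csInf hSne fun s hs => hs.1
    have hτt : τ ≤ t := csInf_le hSbdd htS
    have hbefore : ∀ s : ℝ, 0 ≤ s → s < τ → w s + s < t := by
      intro s hs0 hsτ
      by_contra h
      push_neg at h
      exact absurd (csInf_le hSbdd ⟨hs0, le_trans (le_of_lt hsτ) hτt, h⟩) (not_le.mpr hsτ)
    have hafter : ∀ s : ℝ, τ < s → t ≤ w s + s := by
      intro s hs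
      obtain ⟨s', hs'S, hs's⟩ := exists_lt_of_csInf_lt hSne hs
      exact le_trans hs'S.2.2 (hw.mono_add hs'S.1 (le_of_lt hs's))
    -- ϑ term vanishes
    have hnull : ϑ k (shiftd Lset t) = 0 :=
      theta_null D ϑ hϑ k ht (by rw [← hw0]; exact htw)
    -- split the integral
    set f : ℝ → ℝ := fun s => kern (D.Γ k) (w' s) (shiftd Lset (t - s)) with hfdef
    have hII1 : IntervalIntegrable f volume 0 τ :=
      hII.mono_set (by rw [uIcc_of_le hτ0, uIcc_of_le ht]; exact Icc_subset_Icc le_rfl hτt)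
    have hII2 : IntervalIntegrable f volume τ t :=
      hII.mono_set (by rw [uIcc_of_le hτt, uIcc_of_le ht]; exact Icc_subset_Icc hτ0 le_rfl)
    have hsplit : (∫ s in (0:ℝ)..t, f s) = (∫ s in (0:ℝ)..τ, f s) + ∫ s in τ..t, f s :=
      (intervalIntegral.integral_add_adjacent_intervals hII1 hII2).symm
    have hne : ∀ c : ℝ, ∀ᵐ x : ℝ, x ≠ c := by
      intro c
      refine ae_iff.mpr ?_
      simpa using Real.volume_singleton
    have hzero : (∫ s in (0:ℝ)..τ, f s) = 0 := by
      have : (∫ s in (0:ℝ)..τ, f s) = ∫ s in (0:ℝ)..τ, (0:ℝ) := by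
        refine intervalIntegral.integral_congr_ae ?_
        filter_upwards [hne τ] with x hxτ hx
        rw [uIoc_of_le hτ0] at hx
        have hxτ' : x < τ := lt_of_le_of_ne hx.2 hxτ
        have hx0 : 0 ≤ x := le_of_lt hx.1
        have := hbefore x hx0 hxτ'
        simp only [hfdef]
        rw [← hww x hx0]
        exact kern_eq_zero_of_lt (D.Γ k) (by linarith)
      rw [this, intervalIntegral.integral_zero]
    have hmain : (∫ s in τ..t, f s) =
        ∫ v in τ..t, (Gk (D.Γ k) (t - v) - Gk (D.Γ k) (w v)) := by
      refine intervalIntegral.integral_congr_ae ?_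
      filter_upwards [hne t] with x hxt hx
      rw [uIoc_of_le hτt] at hx
      have hxlt : x < t := lt_of_le_of_ne hx.2 hxt
      have hx0 : 0 ≤ x := le_trans hτ0 (le_of_lt hx.1)
      have hwx : t - x ≤ w x := by have := hafter x hx.1; linarith
      have hwxpos : 0 < w x := lt_of_lt_of_le (by linarith : (0:ℝ) < t - x) hwx
      simp only [hfdef]
      rw [← hww x hx0]
      exact kern_eq (D.Γ k) (D.Γ_noAtom k) hwxpos (by linarith) hwx
    show ζ t k Lset = ENNReal.ofReal
      (D.lam k * ∫ v in (tauF w t)..t, (Gk (D.Γ k) (t - v) - Gk (D.Γ k) (w v)))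
    rw [hform', hnull, zero_add, hτeq]
    congr 1
    rw [hsplit, hzero, zero_add, hmain]


end OverloadedFIFO
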